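/- Let ⟨γ_n : n < ω⟩ be a strictly increasing sequence of infinite cardinals with supremum γ, and let 𝒟 be a function with domain {(0,0)} ∪ {(n,α) : 0 < n < ω, α < γ_{n-1}} such that 𝒟(0,0) is a γ_0-complete ultrafilter on γ_0 and, for each 0 < n < ω, each 𝒟(n,α) is a γ_n-complete ultrafilter on γ_n with 𝒟(n,α) ≠ 𝒟(n,β) whenever α ≠ β. Then every antichain in the forcing notion P_𝒟 (a set of pairwise incompatible conditions) has cardinality at most γ. -/

import Mathlib

universe u v

/-- An ultrafilter `W` on a set is `κ`-complete if the intersection of any family of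
fewer than `κ` members of `W` is again a member of `W`. -/
def UFComplete (κ : Cardinal.{u}) {X : Type v} (W : Ultrafilter X) : Prop :=
  ∀ (ι : Type u) (f : ι → Set X), Cardinal.mk ι < κ → (∀ i, f i ∈ W) → (⋂ i, f i) ∈ W

/-- The set of ordinals below the cardinal `c`. -/
def OT (c : Cardinal.{u}) : Type (u + 1) := ↥(Set.Iio c.ord)

/-- A `𝒟`-string: a nonempty finite strictly increasing sequence `s` of ordinals with
`s(i) < γ_i` for all `i < |s|`. -/
def IsStr (γ : ℕ → Cardinal.{u}) (s : List Ordinal.{u}) : Prop :=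
  s ≠ [] ∧ s.Pairwise (· < ·) ∧ ∀ (i : ℕ) (h : i < s.length), s.get ⟨i, h⟩ < (γ i).ord

/-- A `𝒟`-choice function: `F(x) ∈ 𝒟(x)` for every `x` in the domain
`{(0,0)} ∪ {(n,α) : 0 < n < ω, α < γ_{n-1}}` of `𝒟`. -/
def IsDChoice (γ : ℕ → Cardinal.{u})
    (D : (n : ℕ) → Ordinal.{u} → Ultrafilter (OT (γ n)))
    (F : (n : ℕ) → Ordinal.{u} → Set (OT (γ n))) : Prop :=
  F 0 0 ∈ D 0 0 ∧ ∀ (n : ℕ) (α : Ordinal.{u}), α < (γ n).ord → F (n + 1) α ∈ D (n + 1) α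

/-- A condition of `P_𝒟`: a pair `(s, F)` where `s` is a `𝒟`-string and `F` a
`𝒟`-choice function. -/
def IsCondD (γ : ℕ → Cardinal.{u})
    (D : (n : ℕ) → Ordinal.{u} → Ultrafilter (OT (γ n)))
    (p : List Ordinal.{u} × ((n : ℕ) → Ordinal.{u} → Set (OT (γ n)))) : Prop :=
  IsStr γ p.1 ∧ IsDChoice γ D p.2

/-- `p = (s', F')` is stronger than `q = (s, F)`:
(a) `|s| ≤ |s'|` and `s'↾|s| = s`; (b) `F'(x) ⊆ F(x)` for all `x` in the domain of `𝒟`;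
(c) `s'(i) ∈ F(i, s'(i-1))` for all `|s| ≤ i < |s'|`. -/
def StrongerD (γ : ℕ → Cardinal.{u})
    (p q : List Ordinal.{u} × ((n : ℕ) → Ordinal.{u} → Set (OT (γ n)))) : Prop :=
  q.1 <+: p.1 ∧
  (p.2 0 0 ⊆ q.2 0 0 ∧
    ∀ (n : ℕ) (α : Ordinal.{u}), α < (γ n).ord → p.2 (n + 1) α ⊆ q.2 (n + 1) α) ∧
  ∀ (i : ℕ) (h : i < p.1.length), q.1.length ≤ i →
    p.1.get ⟨i, h⟩ ∈ Subtype.val '' (q.2 i (p.1.get ⟨i - 1, by omega⟩))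

/-- Compatibility in `P_𝒟`: some condition is stronger than both. -/
def CompatibleD (γ : ℕ → Cardinal.{u})
    (D : (n : ℕ) → Ordinal.{u} → Ultrafilter (OT (γ n)))
    (p q : List Ordinal.{u} × ((n : ℕ) → Ordinal.{u} → Set (OT (γ n)))) : Prop :=
  ∃ r, IsCondD γ D r ∧ StrongerD γ r p ∧ StrongerD γ r q

/-- With `⟨γ_n : n < ω⟩` a strictly increasing sequence of infinite
cardinals with supremum `γ` and `𝒟` a list of `γ_n`-complete ultrafilters on the `γ_n`
as described (pairwise distinct at each level `n ≥ 1`), every antichain of the forcing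
notion `P_𝒟` has cardinality at most `γ`. -/
theorem antichain_le_gamma (γ : ℕ → Cardinal.{u}) (hmono : StrictMono γ)
    (hinf : ∀ n, Cardinal.aleph0 ≤ γ n)
    (D : (n : ℕ) → Ordinal.{u} → Ultrafilter (OT (γ n)))
    (hD0 : UFComplete (γ 0) (D 0 0))
    (hDn : ∀ (n : ℕ) (α : Ordinal.{u}), α < (γ n).ord →
      UFComplete (γ (n + 1)) (D (n + 1) α))
    (hdist : ∀ (n : ℕ) (α β : Ordinal.{u}), α < (γ n).ord → β < (γ n).ord →
      α ≠ β → D (n + 1) α ≠ D (n + 1) β)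
    (A : Set (List Ordinal.{u} × ((n : ℕ) → Ordinal.{u} → Set (OT (γ n)))))
    (hA : ∀ p ∈ A, IsCondD γ D p)
    (hanti : ∀ p ∈ A, ∀ q ∈ A, p ≠ q → ¬ CompatibleD γ D p q) :
    Cardinal.mk A ≤ Cardinal.lift.{u + 1} (⨆ n, γ n) := by

  classical
  -- Step 1: two conditions in the antichain with the same string are equal.
  have key : ∀ p ∈ A, ∀ q ∈ A, p.1 = q.1 → p = q := by
    intro p hp q hq hpq
    by_contra hne
    apply hanti p hp q hq hne
    refine ⟨(p.1, fun n α => p.2 n α ∩ q.2 n α), ⟨(hA p hp).1, ?_, ?_⟩, ?_, ?_⟩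
    · exact Ultrafilter.mem_coe.1 (Filter.inter_mem (Ultrafilter.mem_coe.2 (hA p hp).2.1) (Ultrafilter.mem_coe.2 (hA q hq).2.1))
    · exact fun n α hα =>
        Ultrafilter.mem_coe.1 (Filter.inter_mem (Ultrafilter.mem_coe.2 ((hA p hp).2.2 n α hα)) (Ultrafilter.mem_coe.2 ((hA q hq).2.2 n α hα)))
    · exact ⟨List.prefix_refl _,
        ⟨fun x hx => hx.1, fun n α _ x hx => hx.1⟩,
        fun i h hle => absurd h (not_lt.2 hle)⟩
    · refine ⟨hpq ▸ List.prefix_refl _,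
        ⟨fun x hx => hx.2, fun n α _ x hx => hx.2⟩,
        fun i h hle => ?_⟩
      have h' : i < q.1.length := by rw [← hpq]; exact h
      exact absurd h' (not_lt.2 hle)
  -- Step 2: inject the antichain into a sigma type of finite tuples.
  set T := Σ n : ℕ, (Fin n → OT (γ n)) with hT
  have hbound : ∀ (p : A) (i : Fin (p.1.1.length)),
      (p.1.1.get i) ∈ Set.Iio (γ (p.1.1.length)).ord := by
    intro p i
    exact lt_of_lt_of_le ((hA p.1 p.2).1.2.2 i i.isLt)
      (Cardinal.ord_le_ord.2 (hmono.monotone (le_of_lt i.isLt)))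
  set g : A → T := fun p => ⟨p.1.1.length, fun i => ⟨p.1.1.get i, hbound p i⟩⟩ with hg
  have hinj : Function.Injective g := by
    intro p q h
    have hlist : p.1.1 = q.1.1 := by
      have h' := congrArg (fun x : T => List.ofFn (fun i => Subtype.val (x.2 i))) h
      change List.ofFn (fun i => (p.1.1.get i)) = List.ofFn (fun i => q.1.1.get i) at h'
      simpa [hg, List.ofFn_get] using h'
    exact Subtype.ext (key p.1 p.2 q.1 q.2 hlist)
  have h1 : Cardinal.mk A ≤ Cardinal.mk T := Cardinal.mk_le_of_injective hinj
  refine h1.trans ?_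
  -- Step 3: the sigma type has cardinality at most the supremum.
  show Cardinal.mk (Σ n : ℕ, (Fin n → ↥(Set.Iio (γ n).ord))) ≤ Cardinal.lift.{u+1} (⨆ n, γ n)
  rw [Cardinal.mk_sigma]
  have hC : Cardinal.aleph0 ≤ Cardinal.lift.{u+1} (⨆ n, γ n) := by
    have := (hinf 0).trans (le_ciSup (Cardinal.bddAbove_range γ) 0)
    simpa using Cardinal.lift_le.{u+1}.2 this
  calc Cardinal.sum (fun n => Cardinal.mk (Fin n → ↥(Set.Iio (γ n).ord)))
      ≤ Cardinal.sum (fun _ : ℕ => Cardinal.lift.{u+1} (⨆ n, γ n)) := by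
        apply Cardinal.sum_le_sum
        intro n
        have hIio : Cardinal.mk (↥(Set.Iio (γ n).ord)) = Cardinal.lift.{u+1} (γ n) := by
          rw [Ordinal.mk_Iio_ordinal, Cardinal.card_ord]
        have harrow : Cardinal.mk (Fin n → ↥(Set.Iio (γ n).ord)) = (Cardinal.lift.{u+1} (γ n)) ^ n := by
          rw [Cardinal.mk_arrow, hIio]
          simp [Cardinal.power_natCast]
        rw [harrow]
        have hle : Cardinal.lift.{u+1} (γ n) ≤ Cardinal.lift.{u+1} (⨆ n, γ n) :=
          Cardinal.lift_le.2 (le_ciSup (Cardinal.bddAbove_range γ) n)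
        exact (Cardinal.power_nat_le
          (by simpa using Cardinal.lift_le.{u+1}.2 (hinf n))).trans hle
    _ = Cardinal.lift.{u+1} (⨆ n, γ n) := by
        rw [Cardinal.sum_const]
        simp [Cardinal.aleph0_mul_eq hC]
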